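/- arXiv:1710.08991 — 2 statements merged into one kernel-verified Lean document; each statement's English description precedes it below -/
import Mathlib

section
/- Let Γ ≥ 1, let K̂¹, …, K̂^Γ, p₁, π₁, …, π_Γ be real numbers, and let M_MFC be the Γ×Γ real matrix with entries (M_MFC)_{ij} = K̂^i·δ_{ij} + 2p₁π_j. Let Ĥ be the Γ×Γ real matrix with diagonal entries Ĥ_{ll} = ∏_{j≠l} K̂^j + ∑_{j≠l} 2p₁π_j · ∏_{i≠l, i≠j} K̂^i and off-diagonal entries Ĥ_{lm} = −2p₁π_m · ∏_{j≠l, j≠m} K̂^j for l ≠ m. Then M_MFC · Ĥ = (det M_MFC) · I_Γ; in particular, if det M_MFC ≠ 0 then M_MFC⁻¹ = (1/det M_MFC) · Ĥ. -/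
open Finset


-- determinant formula, nonzero case
lemma det_diag_add_ne {n : ℕ} (K w : Fin n → ℝ) (hK : ∀ i, K i ≠ 0) :
    Matrix.det (Matrix.of fun i j => (if i = j then K i else 0) + w j) =
      (∏ j, K j) + ∑ j, w j * ∏ i ∈ univ.erase j, K i := by
  have hM : (Matrix.of fun i j : Fin n => (if i = j then K i else 0) + w j) =
      Matrix.diagonal K + Matrix.replicateCol Unit (fun _ => (1:ℝ)) * Matrix.replicateRow Unit w := by
    ext i j
    simp [Matrix.mul_apply, Matrix.diagonal_apply]
  have hdet : IsUnit (Matrix.diagonal K).det := by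
    rw [Matrix.det_diagonal]
    exact isUnit_iff_ne_zero.2 (Finset.prod_ne_zero_iff.2 fun i _ => hK i)
  rw [hM, Matrix.det_add_replicateCol_mul_replicateRow hdet, Matrix.det_diagonal, Matrix.det_unique]
  have hinv : (Matrix.diagonal K)⁻¹ = Matrix.diagonal (fun i => (K i)⁻¹) := by
    refine Matrix.inv_eq_right_inv ?_
    rw [Matrix.diagonal_mul_diagonal]
    have : (fun i => K i * (K i)⁻¹) = fun _ => (1:ℝ) := funext fun i => mul_inv_cancel₀ (hK i)
    rw [this, Matrix.diagonal_one]
  rw [hinv]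
  simp only [Matrix.add_apply, Matrix.one_apply_eq, Matrix.mul_apply, Matrix.replicateRow_apply,
    Matrix.replicateCol_apply, Matrix.diagonal_apply, Fintype.sum_unique]
  rw [mul_add, mul_one]
  congr 1
  rw [Finset.mul_sum]
  refine Finset.sum_congr rfl fun j _ => ?_
  rw [Finset.sum_eq_single j]
  · rw [← Finset.mul_prod_erase univ K (Finset.mem_univ j)]
    rw [if_pos rfl]
    field_simp [hK j]
  · intro b _ hb
    simp [Matrix.diagonal_apply, hb]
  · simp

lemma det_diag_add {n : ℕ} (K w : Fin n → ℝ) :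
    Matrix.det (Matrix.of fun i j => (if i = j then K i else 0) + w j) =
      (∏ j, K j) + ∑ j, w j * ∏ i ∈ univ.erase j, K i := by
  have key : (fun t : ℝ => Matrix.det (Matrix.of fun i j : Fin n =>
        (if i = j then K i + t else 0) + w j))
      = fun t : ℝ => (∏ j, (K j + t)) + ∑ j, w j * ∏ i ∈ univ.erase j, (K i + t) := by
    have hdense : Dense {t : ℝ | ∀ i, K i + t ≠ 0} := by
      have h1 : (Set.range (fun i : Fin n => -K i)).Countable :=
        (Set.finite_range _).countable
      refine (Set.Countable.dense_compl ℝ h1).mono ?_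
      intro t ht i
      intro h0
      exact ht ⟨i, by simp; linarith⟩
    refine Continuous.ext_on hdense ?_ ?_ ?_
    · refine Continuous.matrix_det (continuous_matrix fun i j => ?_)
      simp only [Matrix.of_apply]
      by_cases h : i = j <;> simp [h] <;> fun_prop
    · fun_prop
    · intro t ht
      exact det_diag_add_ne (fun i => K i + t) w ht
  simpa using congrFun key 0


theorem stmt_5 (Γ : ℕ) (hΓ : 1 ≤ Γ) (K : Fin Γ → ℝ) (p₁ : ℝ) (π : Fin Γ → ℝ)
    (M H : Matrix (Fin Γ) (Fin Γ) ℝ)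
    (hM : ∀ i j, M i j = (if i = j then K i else 0) + 2 * p₁ * π j)
    (hH : ∀ l m, H l m =
      if l = m then
        (∏ j ∈ univ.erase l, K j)
          + ∑ j ∈ univ.erase l, (2 * p₁ * π j) * ∏ i ∈ (univ.erase l).erase j, K i
      else
        -(2 * p₁ * π m) * ∏ j ∈ (univ.erase l).erase m, K j) :
    M * H = M.det • (1 : Matrix (Fin Γ) (Fin Γ) ℝ) ∧
    (M.det ≠ 0 → M⁻¹ = (M.det)⁻¹ • H) := by
  have hprod : ∀ l : Fin Γ, K l * ∏ i ∈ univ.erase l, K i = ∏ i, K i :=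
    fun l => Finset.mul_prod_erase univ K (mem_univ l)
  have hprod2 : ∀ l m : Fin Γ, l ≠ m → K l * ∏ i ∈ (univ.erase m).erase l, K i
      = ∏ i ∈ univ.erase m, K i := fun l m h =>
    Finset.mul_prod_erase _ K (Finset.mem_erase.2 ⟨h, mem_univ l⟩)
  have hdet : M.det = (∏ j, K j) + ∑ j, (2 * p₁ * π j) * ∏ i ∈ univ.erase j, K i := by
    have hMeq : M = Matrix.of fun i j => (if i = j then K i else 0) + 2 * p₁ * π j := by
      ext i j; rw [hM]; rfl
    rw [hMeq, det_diag_add]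
  have key : ∀ l m, ∑ k, M l k * H k m =
      ((∏ j, K j) + ∑ j, (2 * p₁ * π j) * ∏ i ∈ univ.erase j, K i)
        * (if l = m then 1 else 0) := by
    intro l m
    have hsum : ∑ k, M l k * H k m
        = K l * H l m + ∑ k, (2 * p₁ * π k) * H k m := by
      simp only [hM, add_mul]
      rw [Finset.sum_add_distrib]
      congr 1
      rw [Finset.sum_eq_single l]
      · simp
      · intro b _ hb; simp [Ne.symm hb]
      · simp
    rw [hsum]
    by_cases h : l = m
    · subst h
      rw [if_pos rfl, mul_one]
      rw [← Finset.add_sum_erase univ (fun k => (2 * p₁ * π k) * H k l) (mem_univ l)]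
      have h1 : ∑ k ∈ univ.erase l, (2 * p₁ * π k) * H k l
          = -((2 * p₁ * π l) * ∑ k ∈ univ.erase l,
              (2 * p₁ * π k) * ∏ i ∈ (univ.erase l).erase k, K i) := by
        rw [Finset.mul_sum, ← Finset.sum_neg_distrib]
        refine Finset.sum_congr rfl fun k hk => ?_
        have hkl : k ≠ l := (Finset.mem_erase.1 hk).1
        rw [hH k l, if_neg hkl, Finset.erase_right_comm]
        ring
      have h2 : K l * (∑ j ∈ univ.erase l, (2 * p₁ * π j) * ∏ i ∈ (univ.erase l).erase j, K i)
          = ∑ j ∈ univ.erase l, (2 * p₁ * π j) * ∏ i ∈ univ.erase j, K i := by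
        rw [Finset.mul_sum]
        refine Finset.sum_congr rfl fun j hj => ?_
        have hjl : j ≠ l := (Finset.mem_erase.1 hj).1
        rw [Finset.erase_right_comm, show K l * ((2 * p₁ * π j) * ∏ i ∈ (univ.erase j).erase l, K i)
          = (2 * p₁ * π j) * (K l * ∏ i ∈ (univ.erase j).erase l, K i) from by ring,
          hprod2 l j (Ne.symm hjl)]
      rw [h1, hH l l, if_pos rfl,
        ← Finset.add_sum_erase univ (fun j => (2 * p₁ * π j) * ∏ i ∈ univ.erase j, K i) (mem_univ l)]
      rw [mul_add, h2, mul_add]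
      rw [← hprod l]
      ring
    · rw [if_neg h, mul_zero]
      have h1 : ∑ k ∈ univ.erase m, (2 * p₁ * π k) * H k m
          = -((2 * p₁ * π m) * ∑ k ∈ univ.erase m,
              (2 * p₁ * π k) * ∏ i ∈ (univ.erase m).erase k, K i) := by
        rw [Finset.mul_sum, ← Finset.sum_neg_distrib]
        refine Finset.sum_congr rfl fun k hk => ?_
        have hkm : k ≠ m := (Finset.mem_erase.1 hk).1
        rw [hH k m, if_neg hkm, Finset.erase_right_comm]
        ring
      rw [← Finset.add_sum_erase univ (fun k => (2 * p₁ * π k) * H k m) (mem_univ m)]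
      rw [h1, hH m m, if_pos rfl, hH l m, if_neg h]
      have h3 : K l * ∏ j ∈ (univ.erase l).erase m, K j = ∏ j ∈ univ.erase m, K j := by
        rw [Finset.erase_right_comm]; exact hprod2 l m h
      rw [show K l * (-(2 * p₁ * π m) * ∏ j ∈ (univ.erase l).erase m, K j)
        = -(2 * p₁ * π m) * (K l * ∏ j ∈ (univ.erase l).erase m, K j) from by ring, h3]
      ring
  constructor
  · ext l m
    rw [Matrix.mul_apply, key, hdet]
    simp [Matrix.one_apply, Matrix.smul_apply]
  · intro hd
    refine (Matrix.inv_eq_right_inv ?_)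
    have hMH : M * H = M.det • (1 : Matrix (Fin Γ) (Fin Γ) ℝ) := by
      ext l m
      rw [Matrix.mul_apply, key, hdet]
      simp [Matrix.one_apply, Matrix.smul_apply]
    rw [Matrix.mul_smul, hMH, smul_smul, inv_mul_cancel₀ hd, one_smul]
end

section
/- Let A₂ > 0, B₂ > 0, Δ > 0, 0 ≤ T, and set ρ = √(A₂·Δ). Define φ : ℝ → ℝ by φ(t) = −(ρ/Δ) · [e^{−ρ(T−t)}(−B₂Δ + ρ) − e^{ρ(T−t)}(B₂Δ + ρ)] / [e^{−ρ(T−t)}(−B₂Δ + ρ) + e^{ρ(T−t)}(B₂Δ + ρ)] − B₂. Then φ(T) = 0 and for every t ∈ [0,T] the function φ is differentiable at t with φ'(t) − Δ·φ(t)² − 2B₂Δ·φ(t) + A₂ − B₂²·Δ = 0. -/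
open Set

theorem stmt_19 (A₂ B₂ Δ T : ℝ) (hA₂ : 0 < A₂) (hB₂ : 0 < B₂) (hΔ : 0 < Δ)
    (hT : 0 ≤ T) (ρ : ℝ) (hρ : ρ = Real.sqrt (A₂ * Δ))
    (φ : ℝ → ℝ)
    (hφ : ∀ t, φ t = -(ρ / Δ) *
      ((Real.exp (-ρ * (T - t)) * (-B₂ * Δ + ρ) - Real.exp (ρ * (T - t)) * (B₂ * Δ + ρ)) /
       (Real.exp (-ρ * (T - t)) * (-B₂ * Δ + ρ) + Real.exp (ρ * (T - t)) * (B₂ * Δ + ρ)))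
      - B₂) :
    φ T = 0 ∧
    ∀ t ∈ Icc 0 T, ∃ φ' : ℝ, HasDerivAt φ φ' t ∧
      φ' - Δ * (φ t) ^ 2 - 2 * B₂ * Δ * φ t + A₂ - B₂ ^ 2 * Δ = 0 := by
  have hρ2 : ρ ^ 2 = A₂ * Δ := by
    rw [hρ]; exact Real.sq_sqrt (by positivity)
  have hρpos : 0 < ρ := by
    rw [hρ]; positivity
  have hA2 : A₂ = ρ ^ 2 / Δ := by field_simp [hρ2]; linarith [hρ2]
  have hDpos : ∀ t ∈ Icc (0:ℝ) T, 0 <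
      Real.exp (-ρ * (T - t)) * (-B₂ * Δ + ρ) + Real.exp (ρ * (T - t)) * (B₂ * Δ + ρ) := by
    intro t ht
    have hs : 0 ≤ T - t := by linarith [ht.2]
    have h1 : Real.exp (-ρ * (T - t)) ≤ Real.exp (ρ * (T - t)) := by
      apply Real.exp_le_exp.2; nlinarith
    have h2 : 0 < Real.exp (-ρ * (T - t)) := Real.exp_pos _
    have hb : 0 < Real.exp (ρ * (T - t)) * (B₂ * Δ + ρ) :=
      mul_pos (Real.exp_pos _) (by positivity)
    rcases le_or_gt 0 (-B₂ * Δ + ρ) with h | h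
    · nlinarith [mul_nonneg h2.le h]
    · nlinarith
  have hφeq : φ = fun t => -(ρ / Δ) *
      ((Real.exp (-ρ * (T - t)) * (-B₂ * Δ + ρ) - Real.exp (ρ * (T - t)) * (B₂ * Δ + ρ)) /
       (Real.exp (-ρ * (T - t)) * (-B₂ * Δ + ρ) + Real.exp (ρ * (T - t)) * (B₂ * Δ + ρ)))
      - B₂ := funext hφ
  constructor
  · rw [hφ T]
    simp only [sub_self, mul_zero, Real.exp_zero, one_mul]
    have : (-B₂ * Δ + ρ + (B₂ * Δ + ρ)) = 2 * ρ := by ring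
    rw [this]
    field_simp
    ring
  · intro t ht
    have hDne : Real.exp (-ρ * (T - t)) * (-B₂ * Δ + ρ) +
        Real.exp (ρ * (T - t)) * (B₂ * Δ + ρ) ≠ 0 := ne_of_gt (hDpos t ht)
    -- derivatives of the exponentials
    have hlin1 : HasDerivAt (fun t : ℝ => -ρ * (T - t)) ρ t := by
      have := ((hasDerivAt_id t).const_sub T).const_mul (-ρ)
      simpa using this
    have hlin2 : HasDerivAt (fun t : ℝ => ρ * (T - t)) (-ρ) t := by
      have := ((hasDerivAt_id t).const_sub T).const_mul ρ
      simpa using this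
    have hu : HasDerivAt (fun t : ℝ => Real.exp (-ρ * (T - t)))
        (Real.exp (-ρ * (T - t)) * ρ) t := hlin1.exp
    have hv : HasDerivAt (fun t : ℝ => Real.exp (ρ * (T - t)))
        (Real.exp (ρ * (T - t)) * (-ρ)) t := hlin2.exp
    have hN : HasDerivAt (fun t : ℝ =>
        Real.exp (-ρ * (T - t)) * (-B₂ * Δ + ρ) - Real.exp (ρ * (T - t)) * (B₂ * Δ + ρ))
        (Real.exp (-ρ * (T - t)) * ρ * (-B₂ * Δ + ρ) -
          Real.exp (ρ * (T - t)) * (-ρ) * (B₂ * Δ + ρ)) t :=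
      (hu.mul_const _).sub (hv.mul_const _)
    have hD : HasDerivAt (fun t : ℝ =>
        Real.exp (-ρ * (T - t)) * (-B₂ * Δ + ρ) + Real.exp (ρ * (T - t)) * (B₂ * Δ + ρ))
        (Real.exp (-ρ * (T - t)) * ρ * (-B₂ * Δ + ρ) +
          Real.exp (ρ * (T - t)) * (-ρ) * (B₂ * Δ + ρ)) t :=
      (hu.mul_const _).add (hv.mul_const _)
    have hq := hN.div hD hDne
    have hder := (hq.const_mul (-(ρ / Δ))).sub_const B₂
    set E1 := Real.exp (-ρ * (T - t)) with hE1
    set E2 := Real.exp (ρ * (T - t)) with hE2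
    set N := E1 * (-B₂ * Δ + ρ) - E2 * (B₂ * Δ + ρ) with hNdef
    set D := E1 * (-B₂ * Δ + ρ) + E2 * (B₂ * Δ + ρ) with hDdef
    have hDne' : E1 * (-B₂ * Δ + ρ) + E2 * (B₂ * Δ + ρ) ≠ 0 := hDne
    have hder2 : HasDerivAt φ (-(ρ / Δ) * (ρ * (1 - (N / D) ^ 2))) t := by
      rw [hφeq]
      refine hder.congr_deriv (congrArg (fun x => -(ρ / Δ) * x) ?_)
      have h2 : (1 : ℝ) - (N / D) ^ 2 = (D ^ 2 - N ^ 2) / D ^ 2 := by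
        field_simp
      rw [h2, ← mul_div_assoc]
      congr 1
      simp only [hNdef, hDdef]
      ring
    refine ⟨_, hder2, ?_⟩
    rw [hφ t, hA2]
    set q := N / D
    field_simp
    ring
end
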